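/- Let B₀ > 0, ω ≥ 0 and let g : (0,∞) → ℝ be a nonnegative measurable function with s ↦ s·g(s) integrable on (0,∞). Set G(r) = ω·∫₀^r g(s)·s ds, α = ω·∫₀^∞ g(s)·s ds, a₀(r) = B₀r/2, a(r) = B₀r/2 − G(r)/r, V_k(r) = (2k/r)(a₀(r) − a(r)) + a(r)² − a₀(r)², and ψ_k(r) = √(B₀/Γ(k+1))·(B₀/2)^{k/2}·r^k·exp(−B₀r²/4). Then for every integer k ≥ 1: ∫₀^∞ ψ_k(r)²·(V_k(r))₋·r dr ≤ λ_k + α·B₀/√(2πk), where λ_k = 2kω·∫₀^∞ ψ_k(r)²·(∫_r^∞ g(s)·s ds)·r^{−1} dr and x₋ = max(−x,0). -/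

import Mathlib

open Real MeasureTheory

lemma stirling_bound_aux (k : ℕ) (hk : 1 ≤ k) :
    Real.sqrt (2 * π * k) * ((k : ℝ) ^ k * Real.exp (-(k : ℝ))) ≤ (Nat.factorial k : ℝ) := by
  have hkpos : (0:ℝ) < k := by exact_mod_cast hk
  have h1 : Real.sqrt π ≤ Stirling.stirlingSeq k := by
    obtain ⟨m, rfl⟩ := Nat.exists_eq_add_of_le hk
    have htend : Filter.Tendsto (Stirling.stirlingSeq ∘ Nat.succ) Filter.atTop
        (nhds (Real.sqrt π)) :=
      Stirling.tendsto_stirlingSeq_sqrt_pi.comp (Filter.tendsto_add_atTop_nat 1)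
    simpa [Nat.add_comm] using Stirling.stirlingSeq'_antitone.le_of_tendsto htend m
  have hden : (0:ℝ) < Real.sqrt (2 * k) * ((k : ℝ) / Real.exp 1) ^ k := by positivity
  have h2 : (Nat.factorial k : ℝ)
      = Stirling.stirlingSeq k * (Real.sqrt (2 * k) * ((k:ℝ) / Real.exp 1) ^ k) := by
    rw [Stirling.stirlingSeq, div_mul_cancel₀]
    exact ne_of_gt hden
  have h3 : ((k:ℝ) / Real.exp 1) ^ k = (k:ℝ) ^ k * Real.exp (-(k:ℝ)) := by
    rw [div_pow, Real.exp_neg, ← Real.exp_nat_mul, mul_one, div_eq_mul_inv]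
  have h4 : Real.sqrt (2 * π * k) = Real.sqrt π * Real.sqrt (2 * k) := by
    rw [← Real.sqrt_mul pi_pos.le]
    ring_nf
  rw [h2, h3, h4]
  nlinarith [mul_le_mul_of_nonneg_right h1
    (by positivity : (0:ℝ) ≤ Real.sqrt (2*(k:ℝ)) * ((k:ℝ)^k * Real.exp (-(k:ℝ))))]

set_option maxHeartbeats 1000000 in
/-- Lemma 7.6 (lem-aux) of the paper: the expectation `Λ_k` of the negative part of the
effective perturbing potential `V_k` in the normalized Landau ground state `ψ_k` of the
`k`-th angular-momentum channel satisfies `Λ_k ≤ λ_k + αB₀/√(2πk)` for every `k ≥ 1`. -/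
theorem lambda_k_upper_bound
    (B₀ ω : ℝ) (hB₀ : 0 < B₀) (hω : 0 ≤ ω) (g : ℝ → ℝ) (hgmeas : Measurable g)
    (hgnn : ∀ s : ℝ, 0 < s → 0 ≤ g s)
    (hint : IntegrableOn (fun s => g s * s) (Set.Ioi 0))
    (G : ℝ → ℝ) (hG : ∀ r, G r = ω * ∫ s in Set.Ioc (0 : ℝ) r, g s * s)
    (α : ℝ) (hα : α = ω * ∫ s in Set.Ioi (0 : ℝ), g s * s)
    (a₀ a : ℝ → ℝ) (ha₀ : ∀ r, a₀ r = B₀ * r / 2)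
    (ha : ∀ r, a r = B₀ * r / 2 - G r / r)
    (V : ℕ → ℝ → ℝ)
    (hV : ∀ (k : ℕ) (r : ℝ), V k r = 2 * k / r * (a₀ r - a r) + a r ^ 2 - a₀ r ^ 2)
    (ψ : ℕ → ℝ → ℝ)
    (hψ : ∀ (k : ℕ) (r : ℝ), ψ k r = Real.sqrt (B₀ / Real.Gamma ((k : ℝ) + 1))
        * (B₀ / 2) ^ ((k : ℝ) / 2) * r ^ k * Real.exp (-B₀ * r ^ 2 / 4))
    (lam : ℕ → ℝ)
    (hlam : ∀ k : ℕ, lam k = 2 * k * ω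
        * ∫ r in Set.Ioi (0 : ℝ), ψ k r ^ 2 * (∫ s in Set.Ioi r, g s * s) * r⁻¹) :
    ∀ k : ℕ, 1 ≤ k →
      (∫ r in Set.Ioi (0 : ℝ), ψ k r ^ 2 * max (-V k r) 0 * r)
        ≤ lam k + α * B₀ / Real.sqrt (2 * π * k) := by
  intro k hk
  have hkpos : (0:ℝ) < k := by exact_mod_cast hk
  -- basic facts about G and α
  have hGnn : ∀ r : ℝ, 0 ≤ G r := by
    intro r
    rw [hG]
    apply mul_nonneg hω
    apply setIntegral_nonneg measurableSet_Ioc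
    intro s hs
    exact mul_nonneg (hgnn s hs.1) (le_of_lt hs.1)
  have hGle : ∀ r : ℝ, G r ≤ α := by
    intro r
    rw [hG, hα]
    apply mul_le_mul_of_nonneg_left ?_ hω
    apply setIntegral_mono_set hint
    · filter_upwards [ae_restrict_mem measurableSet_Ioi] with s hs
      exact mul_nonneg (hgnn s hs) (le_of_lt hs)
    · exact HasSubset.Subset.eventuallyLE Set.Ioc_subset_Ioi_self
  have hαnn : 0 ≤ α := le_trans (hGnn 0) (hGle 0)
  -- nonnegativity of lam k
  have hlamnn : 0 ≤ lam k := by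
    rw [hlam]
    apply mul_nonneg (by positivity)
    apply setIntegral_nonneg measurableSet_Ioi
    intro r hr
    apply mul_nonneg (mul_nonneg (sq_nonneg _) ?_) (inv_nonneg.2 (le_of_lt hr))
    apply setIntegral_nonneg measurableSet_Ioi
    intro s hs
    have hs0 : (0:ℝ) < s := lt_trans hr hs
    exact mul_nonneg (hgnn s hs0) hs0.le
  -- the squared ground state
  set C : ℝ := B₀ / (Nat.factorial k : ℝ) * (B₀ / 2) ^ k with hCdef
  have hCpos : 0 < C := by positivity
  have hψsq : ∀ r : ℝ, ψ k r ^ 2 = C * (r ^ (2*k) * Real.exp (-B₀ * r ^ 2 / 2)) := by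
    intro r
    rw [hψ]
    have hΓ : Real.Gamma ((k : ℝ) + 1) = (Nat.factorial k : ℝ) := Real.Gamma_nat_eq_factorial k
    have h1 : Real.sqrt (B₀ / Real.Gamma ((k : ℝ) + 1)) ^ 2 = B₀ / (Nat.factorial k : ℝ) := by
      rw [hΓ, Real.sq_sqrt (by positivity)]
    have h2 : ((B₀ / 2 : ℝ) ^ ((k : ℝ) / 2)) ^ 2 = (B₀ / 2 : ℝ) ^ k := by
      rw [← Real.rpow_natCast ((B₀ / 2 : ℝ) ^ ((k : ℝ) / 2)) 2,
        ← Real.rpow_mul (by positivity : (0:ℝ) ≤ B₀/2)]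
      norm_num
    have h3 : ((r : ℝ) ^ k) ^ 2 = r ^ (2 * k) := by rw [← pow_mul, mul_comm]
    have h4 : Real.exp (-B₀ * r ^ 2 / 4) ^ 2 = Real.exp (-B₀ * r ^ 2 / 2) := by
      rw [← Real.exp_nat_mul]
      ring_nf
    rw [mul_pow, mul_pow, mul_pow, h1, h2, h3, h4, hCdef]
    ring
  -- set-up for the explicit integral
  set r₀ : ℝ := Real.sqrt (2*k/B₀) with hr₀
  have hr₀pos : 0 < r₀ := Real.sqrt_pos.2 (by positivity)
  have hr₀sq : r₀ ^ 2 = 2*k/B₀ := Real.sq_sqrt (by positivity)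
  set f : ℝ → ℝ := fun r => -(r ^ (2*k) * Real.exp (-B₀ * r ^ 2 / 2)) with hfdef
  set f' : ℝ → ℝ := fun r => (B₀ * r ^ (2*k+1) - 2*k*r^(2*k-1)) * Real.exp (-B₀ * r ^ 2 / 2)
    with hf'def
  have hderiv : ∀ x ∈ Set.Ici r₀, HasDerivAt f (f' x) x := by
    intro x _
    have h1 : HasDerivAt (fun r : ℝ => r ^ (2*k)) ((2*k : ℕ) * x ^ (2*k-1)) x :=
      hasDerivAt_pow (2*k) x
    have hinner : HasDerivAt (fun r : ℝ => -B₀ * r ^ 2 / 2) (-B₀ * x) x := by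
      have := ((hasDerivAt_pow 2 x).const_mul (-B₀)).div_const 2
      refine this.congr_deriv ?_
      rw [show (2:ℕ) - 1 = 1 from rfl, pow_one]; push_cast; ring
    have h2 := hinner.exp
    have := (h1.mul h2).neg
    refine this.congr_deriv ?_
    simp only [hf'def]
    have hx : x ^ (2*k+1) = x ^ (2*k) * x := by rw [pow_succ]
    have hx2 : x ^ (2*k) = x ^ (2*k-1) * x := by
      rw [← pow_succ]
      congr 1
      omega
    rw [hx, hx2]
    push_cast
    ring
  have hf'nonneg : ∀ x ∈ Set.Ioi r₀, 0 ≤ f' x := by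
    intro x hx
    have hx0 : 0 < x := lt_trans hr₀pos hx
    have hxsq : 2*k/B₀ < x ^ 2 := by
      rw [← hr₀sq]
      exact pow_lt_pow_left₀ hx (le_of_lt hr₀pos) two_ne_zero
    have hfac : B₀ * x ^ (2*k+1) - 2*k*x^(2*k-1) = x^(2*k-1) * (B₀ * x^2 - 2*k) := by
      have hx21 : x ^ (2*k+1) = x ^ (2*k-1) * x ^ 2 := by
        rw [← pow_add]
        congr 1
        omega
      rw [hx21]
      ring
    simp only [hf'def]
    apply mul_nonneg _ (Real.exp_nonneg _)
    rw [hfac]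
    apply mul_nonneg (pow_nonneg hx0.le _)
    have h2k := (div_lt_iff₀ hB₀).mp hxsq
    nlinarith
  have htend : Filter.Tendsto f Filter.atTop (nhds 0) := by
    have h0 : Filter.Tendsto (fun r : ℝ => B₀ * r ^ 2 / 2) Filter.atTop Filter.atTop := by
      apply Filter.Tendsto.atTop_div_const (by norm_num)
      exact Filter.Tendsto.const_mul_atTop hB₀ (Filter.tendsto_pow_atTop two_ne_zero)
    have h1 : Filter.Tendsto (fun y : ℝ => (2/B₀)^k * (y ^ k * Real.exp (-y)))
        Filter.atTop (nhds 0) := by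
      simpa using (tendsto_pow_mul_exp_neg_atTop_nhds_zero k).const_mul ((2/B₀)^k)
    have h2 := (h1.comp h0).neg
    simp only [neg_zero] at h2
    apply h2.congr
    intro r
    have hexp : Real.exp (-(B₀ * r ^ 2 / 2)) = Real.exp (-B₀ * r ^ 2 / 2) := by ring_nf
    have hpow : (2/B₀)^k * (B₀ * r ^ 2 / 2)^k = r ^ (2*k) := by
      rw [← mul_pow, pow_mul]
      congr 1
      field_simp
    simp only [Function.comp, hfdef]
    rw [← hexp, ← hpow]
    ring
  have hIntOn : IntegrableOn f' (Set.Ioi r₀) :=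
    integrableOn_Ioi_deriv_of_nonneg' hderiv hf'nonneg htend
  have hval : ∫ r in Set.Ioi r₀, f' r = (2*k/B₀)^k * Real.exp (-(k:ℝ)) := by
    rw [integral_Ioi_of_hasDerivAt_of_nonneg' hderiv hf'nonneg htend]
    simp only [hfdef]
    rw [zero_sub, neg_neg, pow_mul, hr₀sq]
    congr 1
    congr 1
    field_simp
  -- the majorant function
  set φ : ℝ → ℝ := fun r => ψ k r ^ 2 * max (B₀ - 2*(k:ℝ)/r^2) 0 * r with hφdef
  have hφeq : Set.EqOn φ (Set.indicator (Set.Ioi r₀) (fun r => C * f' r)) (Set.Ioi 0) := by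
    intro r hr
    have hr0 : (0:ℝ) < r := hr
    rcases le_or_gt r r₀ with hle | hlt
    · have hnot : r ∉ Set.Ioi r₀ := by simpa using hle
      rw [Set.indicator_of_notMem hnot]
      have hsq : r ^ 2 ≤ 2*k/B₀ := by
        rw [← hr₀sq]
        exact pow_le_pow_left₀ hr0.le hle 2
      have hmax : max (B₀ - 2*(k:ℝ)/r^2) 0 = 0 := by
        apply max_eq_right
        rw [sub_nonpos, le_div_iff₀ (by positivity)]
        have := (le_div_iff₀ hB₀).mp hsq
        nlinarith
      simp only [hφdef, hmax, mul_zero, zero_mul]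
    · rw [Set.indicator_of_mem (Set.mem_Ioi.mpr hlt)]
      have hsq : 2*k/B₀ < r ^ 2 := by
        rw [← hr₀sq]
        exact pow_lt_pow_left₀ hlt hr₀pos.le two_ne_zero
      have hpos : 0 ≤ B₀ - 2*(k:ℝ)/r^2 := by
        rw [sub_nonneg, div_le_iff₀ (by positivity)]
        have := (div_lt_iff₀ hB₀).mp hsq
        nlinarith
      have hmax : max (B₀ - 2*(k:ℝ)/r^2) 0 = B₀ - 2*(k:ℝ)/r^2 := max_eq_left hpos
      simp only [hφdef, hmax, hf'def, hψsq]
      have hx21 : r ^ (2*k+1) = r ^ (2*k-1) * r ^ 2 := by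
        rw [← pow_add]
        congr 1
        omega
      have hx2 : r ^ (2*k) = r ^ (2*k-1) * r := by
        rw [← pow_succ]
        congr 1
        omega
      field_simp
      rw [hx21, hx2]
      ring
  have hφint : IntegrableOn φ (Set.Ioi (0:ℝ)) := by
    have hFint : IntegrableOn (fun r => C * f' r) (Set.Ioi r₀) := hIntOn.const_mul C
    have hind : IntegrableOn (Set.indicator (Set.Ioi r₀) (fun r => C * f' r)) (Set.Ioi (0:ℝ)) := by
      rw [IntegrableOn, integrable_indicator_iff measurableSet_Ioi, IntegrableOn,
        Measure.restrict_restrict measurableSet_Ioi,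
        Set.inter_eq_self_of_subset_left (Set.Ioi_subset_Ioi hr₀pos.le)]
      exact hFint
    exact hind.congr_fun (fun x hx => (hφeq hx).symm) measurableSet_Ioi
  have hJ : ∫ r in Set.Ioi (0:ℝ), φ r = C * ((2*k/B₀)^k * Real.exp (-(k:ℝ))) := by
    rw [setIntegral_congr_fun measurableSet_Ioi hφeq,
      setIntegral_indicator measurableSet_Ioi,
      Set.inter_eq_self_of_subset_right (Set.Ioi_subset_Ioi hr₀pos.le),
      integral_const_mul, hval]
  -- the key bound on the explicit value
  have hJle : C * ((2*k/B₀)^k * Real.exp (-(k:ℝ))) ≤ B₀ / Real.sqrt (2 * π * k) := by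
    have hCval : C * ((2*k/B₀)^k * Real.exp (-(k:ℝ)))
        = B₀ * ((k:ℝ)^k * Real.exp (-(k:ℝ))) / (Nat.factorial k : ℝ) := by
      have hpk : (B₀/2 : ℝ)^k * (2*k/B₀)^k = (k:ℝ)^k := by
        rw [← mul_pow]
        congr 1
        field_simp
      calc C * ((2*k/B₀)^k * Real.exp (-(k:ℝ)))
          = B₀ / (Nat.factorial k : ℝ) * (((B₀/2:ℝ)^k * (2*k/B₀)^k) * Real.exp (-(k:ℝ))) := by
            rw [hCdef]; ring
        _ = B₀ * ((k:ℝ)^k * Real.exp (-(k:ℝ))) / (Nat.factorial k : ℝ) := by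
            rw [hpk]; ring
    rw [hCval]
    have hst := stirling_bound_aux k hk
    have hsqrtpos : (0:ℝ) < Real.sqrt (2 * π * k) := Real.sqrt_pos.2 (by positivity)
    have hfacpos : (0:ℝ) < (Nat.factorial k : ℝ) := by positivity
    rw [div_le_div_iff₀ hfacpos hsqrtpos]
    calc B₀ * ((k:ℝ)^k * Real.exp (-(k:ℝ))) * Real.sqrt (2 * π * k)
        = B₀ * (Real.sqrt (2 * π * k) * ((k:ℝ)^k * Real.exp (-(k:ℝ)))) := by ring
      _ ≤ B₀ * (Nat.factorial k : ℝ) := by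
          exact mul_le_mul_of_nonneg_left hst hB₀.le
  -- pointwise bound of the integrand
  have hkey : ∀ r ∈ Set.Ioi (0:ℝ), ψ k r ^ 2 * max (-V k r) 0 * r ≤ α * φ r := by
    intro r hr
    have hr0 : (0:ℝ) < r := hr
    have hrne : r ≠ 0 := ne_of_gt hr0
    have hVr : -V k r = G r * (B₀ - 2*(k:ℝ)/r^2) - (G r)^2/r^2 := by
      simp only [hV, ha, ha₀]
      field_simp
      ring
    have hmax : max (-V k r) 0 ≤ α * max (B₀ - 2*(k:ℝ)/r^2) 0 := by
      apply max_le
      · rcases le_or_gt (B₀ - 2*(k:ℝ)/r^2) 0 with hc | hc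
        · rw [max_eq_right hc, mul_zero, hVr]
          have h1 : G r * (B₀ - 2*(k:ℝ)/r^2) ≤ 0 := mul_nonpos_of_nonneg_of_nonpos (hGnn r) hc
          have h2 : 0 ≤ (G r)^2/r^2 := by positivity
          linarith
        · rw [max_eq_left hc.le, hVr]
          have h1 : G r * (B₀ - 2*(k:ℝ)/r^2) ≤ α * (B₀ - 2*(k:ℝ)/r^2) :=
            mul_le_mul_of_nonneg_right (hGle r) hc.le
          have h2 : 0 ≤ (G r)^2/r^2 := by positivity
          linarith
      · exact mul_nonneg hαnn (le_max_right _ _)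
    calc ψ k r ^ 2 * max (-V k r) 0 * r
        ≤ ψ k r ^ 2 * (α * max (B₀ - 2*(k:ℝ)/r^2) 0) * r := by
          apply mul_le_mul_of_nonneg_right _ hr0.le
          exact mul_le_mul_of_nonneg_left hmax (sq_nonneg _)
      _ = α * φ r := by simp only [hφdef]; ring
  -- conclusion
  have hmono : (∫ r in Set.Ioi (0:ℝ), ψ k r ^ 2 * max (-V k r) 0 * r)
      ≤ ∫ r in Set.Ioi (0:ℝ), α * φ r := by
    apply integral_mono_of_nonneg
    · filter_upwards [ae_restrict_mem measurableSet_Ioi] with r hr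
      have hr0 : (0:ℝ) < r := hr
      positivity
    · exact hφint.const_mul α
    · filter_upwards [ae_restrict_mem measurableSet_Ioi] with r hr
      exact hkey r hr
  have hfin : (∫ r in Set.Ioi (0:ℝ), α * φ r) ≤ α * B₀ / Real.sqrt (2 * π * k) := by
    rw [integral_const_mul, hJ]
    calc α * (C * ((2*k/B₀)^k * Real.exp (-(k:ℝ))))
        ≤ α * (B₀ / Real.sqrt (2 * π * k)) := mul_le_mul_of_nonneg_left hJle hαnn
      _ = α * B₀ / Real.sqrt (2 * π * k) := by ring
  linarith
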